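/- Let δ ∈ (0,1), let q ≥ 1 be an integer, and let K be an integer with K > (2q+1)/δ. Let R be a real symmetric positive semidefinite K×K matrix of rank exactly q such that every q×q minor of R is nonzero. Then there exists τ₀ > 0 such that for every τ ∈ (0, τ₀), R is the unique minimizer of the function θ ↦ K^{−2} ‖P^K_δ ∘ (R − θ)‖²_F + τ · rank(θ) over the set of positive semidefinite K×K matrices θ with trace(θ) ≤ trace(R). -/

import Mathlib

open Matrix

/-- The `K × K` band pattern matrix `P^K_δ`, with `(j,l)` entry `1` if
`|j - l| < ⌊Kδ⌋ - 1` and `0` otherwise. -/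
noncomputable def bandMatrix (K : ℕ) (δ : ℝ) : Matrix (Fin K) (Fin K) ℝ :=
  Matrix.of fun j l => if |(j : ℤ) - (l : ℤ)| < ⌊(K : ℝ) * δ⌋ - 1 then 1 else 0

/-- The squared Frobenius norm of a matrix. -/
def frobSq {K : ℕ} (M : Matrix (Fin K) (Fin K) ℝ) : ℝ :=
  ∑ j, ∑ l, (M j l) ^ 2

lemma rank_submatrix_le' {m n : ℕ} (A : Matrix (Fin m) (Fin m) ℝ) (f g : Fin n → Fin m) :
    (A.submatrix f g).rank ≤ A.rank := by
  classical
  have h1 : A.submatrix f g = (Matrix.of fun i k => if k = f i then (1:ℝ) else 0) * A *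
      (Matrix.of fun k i => if k = g i then (1:ℝ) else 0) := by
    ext i i'
    simp [Matrix.mul_apply, ite_mul, Finset.sum_ite_eq, Finset.mul_sum, mul_ite]
  rw [h1]
  exact le_trans (Matrix.rank_mul_le_left _ _) (Matrix.rank_mul_le_right _ _)

lemma det_submatrix_eq_zero {m n : ℕ} (A : Matrix (Fin m) (Fin m) ℝ) (hA : A.rank ≤ n)
    (f g : Fin (n+1) → Fin m) : (A.submatrix f g).det = 0 := by
  by_contra h
  have hu : IsUnit (A.submatrix f g) :=
    (Matrix.isUnit_iff_isUnit_det _).2 (isUnit_iff_ne_zero.2 h)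
  have h2 := Matrix.rank_of_isUnit _ hu
  have h3 := rank_submatrix_le' A f g
  rw [h2, Fintype.card_fin] at h3
  omega

lemma band_ident {K q : ℕ} (hq : 1 ≤ q) (R θ : Matrix (Fin K) (Fin K) ℝ)
    (hθs : ∀ j l : Fin K, θ j l = θ l j)
    (hRs : ∀ j l : Fin K, R j l = R l j)
    (hRr : R.rank ≤ q) (hθr : θ.rank ≤ q)
    (hminor : ∀ f g : Fin q → Fin K, Function.Injective f → Function.Injective g →
      (R.submatrix f g).det ≠ 0)
    (hband : ∀ j l : Fin K, |(j:ℤ) - (l:ℤ)| ≤ 2*(q:ℤ) - 1 → θ j l = R j l) : θ = R := by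
  classical
  have key : ∀ d : ℕ, ∀ j l : Fin K, (l:ℤ) - (j:ℤ) = d → θ j l = R j l := by
    intro d
    induction d using Nat.strong_induction_on with
    | _ d IH =>
      intro j l hd
      by_cases hsmall : (d:ℤ) ≤ 2*(q:ℤ) - 1
      · exact hband j l (by rw [show (j:ℤ) - l = -d by omega]; rw [abs_neg, abs_of_nonneg]
          <;> [exact hsmall; positivity])
      · have hd2q : 2*q ≤ d := by omega
        have hjl : l.val = j.val + d := by omega
        have hlq : q ≤ l.val := by omega
        have hlK : l.val < K := l.isLt
        set a : Fin q → Fin K := fun i => ⟨l.val - q + i.val, by omega⟩ with ha_def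
        have ha : ∀ i : Fin q, ((a i : Fin K) : ℤ) = (l:ℤ) - q + i := by
          intro i; simp only [ha_def]; push_cast [Nat.cast_sub hlq]; omega
        have ha_inj : Function.Injective a := by
          intro i i' h
          have := congrArg (fun x : Fin K => x.val) h
          simp only [ha_def] at this
          exact Fin.ext (by omega)
        set f : Fin (q+1) → Fin K := Fin.snoc a j with hf_def
        set g : Fin (q+1) → Fin K := Fin.snoc a l with hg_def
        set M : Matrix (Fin (q+1)) (Fin (q+1)) ℝ := θ.submatrix f g with hM_def
        set N : Matrix (Fin (q+1)) (Fin (q+1)) ℝ := R.submatrix f g with hN_def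
        have hdetM : M.det = 0 := det_submatrix_eq_zero θ hθr f g
        have hdetN : N.det = 0 := det_submatrix_eq_zero R hRr f g
        have hMN : ∀ i i' : Fin (q+1), (i ≠ Fin.last q ∨ i' ≠ Fin.last q) → M i i' = N i i' := by
          intro i i' hii
          induction i using Fin.lastCases with
          | last =>
            induction i' using Fin.lastCases with
            | last => simp at hii
            | cast i0' =>
              simp only [hM_def, hN_def, Matrix.submatrix_apply, hf_def, hg_def,
                Fin.snoc_last, Fin.snoc_castSucc]
              exact IH (d - q + i0'.val) (by omega) j (a i0')
                (by rw [ha]; push_cast; omega)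
          | cast i0 =>
            induction i' using Fin.lastCases with
            | last =>
              simp only [hM_def, hN_def, Matrix.submatrix_apply, hf_def, hg_def,
                Fin.snoc_last, Fin.snoc_castSucc]
              refine hband (a i0) l ?_
              rw [ha]
              have : (0:ℤ) ≤ i0.val := by positivity
              have h1 : (i0.val : ℤ) ≤ q - 1 := by
                have := i0.isLt; omega
              rw [abs_of_nonpos (by omega)]
              omega
            | cast i0' =>
              simp only [hM_def, hN_def, Matrix.submatrix_apply, hf_def, hg_def,
                Fin.snoc_castSucc]
              refine hband (a i0) (a i0') ?_
              rw [ha, ha]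
              have := i0.isLt; have := i0'.isLt
              rw [abs_sub_le_iff]; constructor <;> omega
        set c : ℝ := θ j l - R j l with hc_def
        have hcol : (fun i => M i (Fin.last q)) =
            (fun i => N i (Fin.last q)) + Pi.single (Fin.last q) c := by
          funext i
          induction i using Fin.lastCases with
          | last =>
            simp only [Pi.add_apply, Pi.single_eq_same, hc_def]
            simp only [hM_def, hN_def, Matrix.submatrix_apply, hf_def, hg_def, Fin.snoc_last]
            ring
          | cast i0 =>
            have hne : (Fin.castSucc i0) ≠ Fin.last q := Fin.castSucc_lt_last i0 |>.ne
            simp only [Pi.add_apply, Pi.single_eq_of_ne hne, add_zero]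
            exact hMN _ _ (Or.inl hne)
        have hM_eq : M = N.updateCol (Fin.last q) (fun i => M i (Fin.last q)) := by
          ext i i'
          by_cases hi' : i' = Fin.last q
          · subst hi'; rw [Matrix.updateCol_self]
          · rw [Matrix.updateCol_ne hi']
            exact hMN i i' (Or.inr hi')
        have hdet1 : M.det = N.det + (N.updateCol (Fin.last q) (Pi.single (Fin.last q) c)).det := by
          rw [hM_eq, hcol, Matrix.det_updateCol_add, Matrix.updateCol_eq_self]
        have hsingle : (Pi.single (Fin.last q) c : Fin (q+1) → ℝ) = c • (Pi.single (Fin.last q) (1:ℝ) : Fin (q+1) → ℝ) := by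
          funext i
          by_cases hi : i = Fin.last q
          · subst hi; simp
          · simp [Pi.single_eq_of_ne hi]
        have hdet2 : (N.updateCol (Fin.last q) (Pi.single (Fin.last q) c)).det
            = c * (R.submatrix a a).det := by
          rw [hsingle, Matrix.det_updateCol_smul]
          congr 1
          set A0 := N.updateCol (Fin.last q) (Pi.single (Fin.last q) (1:ℝ)) with hA0
          rw [Matrix.det_succ_column A0 (Fin.last q)]
          rw [Finset.sum_eq_single (Fin.last q)]
          · have h1 : A0 (Fin.last q) (Fin.last q) = 1 := by
              simp [hA0, Matrix.updateCol_self]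
            rw [h1]
            have hpow : (-1 : ℝ) ^ ((Fin.last q : ℕ) + (Fin.last q : ℕ)) = 1 := by
              rw [Fin.val_last, show q + q = 2*q by ring, pow_mul]; norm_num
            rw [hpow]; simp only [one_mul]
            congr 1
            ext i i'
            simp only [Matrix.submatrix_apply, Fin.succAbove_last]
            rw [hA0, Matrix.updateCol_ne (Fin.castSucc_lt_last i').ne]
            simp only [hN_def, Matrix.submatrix_apply, hf_def, hg_def, Fin.snoc_castSucc]
          · intro i _ hi
            have : A0 i (Fin.last q) = 0 := by
              simp [hA0, Matrix.updateCol_self, Pi.single_eq_of_ne hi]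
            rw [this]; ring
          · intro h; exact absurd (Finset.mem_univ _) h
        have hminor_ne : (R.submatrix a a).det ≠ 0 := hminor a a ha_inj ha_inj
        have : c = 0 := by
          have := hdet1
          rw [hdetM, hdetN, hdet2, zero_add] at this
          rcases mul_eq_zero.mp this.symm with h | h
          · exact h
          · exact absurd h hminor_ne
        rw [hc_def] at this
        linarith
  ext j l
  rcases le_total (j:ℤ) (l:ℤ) with h | h
  · exact key ((l:ℤ) - j).toNat j l (by omega)
  · rw [hθs j l, hRs j l]
    exact key ((j:ℤ) - l).toNat l j (by omega)

theorem unique_minimizer_band_penalized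
    (δ : ℝ) (hδ : δ ∈ Set.Ioo (0 : ℝ) 1) (q K : ℕ) (hq : 1 ≤ q)
    (hK : (2 * (q : ℝ) + 1) / δ < (K : ℝ))
    (R : Matrix (Fin K) (Fin K) ℝ) (hR : R.PosSemidef)
    (hrank : R.rank = q)
    (hminor : ∀ f g : Fin q → Fin K, Function.Injective f → Function.Injective g →
      (R.submatrix f g).det ≠ 0) :
    ∃ τ₀ > (0 : ℝ), ∀ τ ∈ Set.Ioo (0 : ℝ) τ₀,
      ∀ θ : Matrix (Fin K) (Fin K) ℝ, θ.PosSemidef → θ.trace ≤ R.trace →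
        (((K : ℝ) ^ 2)⁻¹ * frobSq ((bandMatrix K δ).hadamard (R - R)) + τ * (R.rank : ℝ)
            ≤ ((K : ℝ) ^ 2)⁻¹ * frobSq ((bandMatrix K δ).hadamard (R - θ)) + τ * (θ.rank : ℝ))
          ∧ (((K : ℝ) ^ 2)⁻¹ * frobSq ((bandMatrix K δ).hadamard (R - θ)) + τ * (θ.rank : ℝ)
              = ((K : ℝ) ^ 2)⁻¹ * frobSq ((bandMatrix K δ).hadamard (R - R)) + τ * (R.rank : ℝ)
              → θ = R) := by
  classical
  obtain ⟨hδ0, hδ1⟩ := hδ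
  obtain ⟨p, rfl⟩ : ∃ p, q = p + 1 := ⟨q - 1, by omega⟩
  set q := p + 1 with hq_def
  have hKδ : (2*(q:ℝ)+1) < K * δ := by rwa [div_lt_iff₀ hδ0] at hK
  have hfloor : (2*(q:ℤ)+1) ≤ ⌊(K:ℝ)*δ⌋ :=
    Int.le_floor.mpr (by push_cast [hq_def] at hKδ ⊢; linarith)
  have hKq : 2*q+1 < K := by
    have h0 : (0:ℝ) < K := lt_trans (by positivity) hK
    have h1 : (K:ℝ) * δ < K := by nlinarith
    have : (2*(q:ℝ)+1) < K := lt_trans hKδ h1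
    exact_mod_cast (by push_cast at this ⊢; linarith : ((2*q+1 : ℕ) : ℝ) < K)
  have hK0 : 0 < K := by omega
  have hK2 : (0:ℝ) < (K:ℝ)^2 := by positivity
  -- band membership for near-diagonal entries
  have hband1 : ∀ j l : Fin K, |(j:ℤ) - (l:ℤ)| ≤ 2*(q:ℤ) - 1 → bandMatrix K δ j l = 1 := by
    intro j l h
    simp only [bandMatrix, Matrix.of_apply]
    rw [if_pos]; omega
  have hfrob_nonneg : ∀ θ : Matrix (Fin K) (Fin K) ℝ,
      0 ≤ frobSq ((bandMatrix K δ).hadamard (R - θ)) := fun θ =>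
    Finset.sum_nonneg fun j _ => Finset.sum_nonneg fun l _ => sq_nonneg _
  have hfrobR : frobSq ((bandMatrix K δ).hadamard (R - R)) = 0 := by
    simp [frobSq, Matrix.hadamard_apply]
  have hzero_band : ∀ θ : Matrix (Fin K) (Fin K) ℝ,
      frobSq ((bandMatrix K δ).hadamard (R - θ)) = 0 →
      ∀ j l : Fin K, |(j:ℤ) - (l:ℤ)| ≤ 2*(q:ℤ) - 1 → θ j l = R j l := by
    intro θ h0 j l hjl
    have h1 : ∀ j' ∈ (Finset.univ : Finset (Fin K)),
        (∑ l', ((bandMatrix K δ).hadamard (R - θ)) j' l' ^ 2) = 0 :=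
      (Finset.sum_eq_zero_iff_of_nonneg fun _ _ =>
        Finset.sum_nonneg fun _ _ => sq_nonneg _).mp h0
    have h2 := (Finset.sum_eq_zero_iff_of_nonneg fun _ _ => sq_nonneg _).mp
      (h1 j (Finset.mem_univ _)) l (Finset.mem_univ _)
    have h3 : ((bandMatrix K δ).hadamard (R - θ)) j l = 0 := by
      exact pow_eq_zero_iff (two_ne_zero) |>.mp h2
    rw [Matrix.hadamard_apply, hband1 j l hjl, one_mul, Matrix.sub_apply] at h3
    linarith
  -- entry bounds for PSD matrices of bounded trace
  have hRtr : 0 ≤ R.trace := by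
    have := hR.2
    have hsum : R.trace = ∑ i, R i i := rfl
    rw [hsum]
    refine Finset.sum_nonneg fun i _ => ?_
    have h := hR.dotProduct_mulVec_nonneg (Pi.single i 1)
    simpa [dotProduct, Matrix.mulVec, Pi.single_apply, ite_mul, mul_ite,
      Finset.sum_ite_eq, Finset.sum_ite_eq'] using h
  have hbound : ∀ θ : Matrix (Fin K) (Fin K) ℝ, θ.PosSemidef → θ.trace ≤ R.trace →
      ∀ j l, θ j l ∈ Set.Icc (-(R.trace)) R.trace := by
    intro θ hpsd htr j l
    have quad : ∀ x : Fin K → ℝ, 0 ≤ x ⬝ᵥ θ.mulVec x := by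
      intro x
      have := hpsd.dotProduct_mulVec_nonneg x
      simpa using this
    have hsingle : ∀ j' l' : Fin K,
        (Pi.single j' (1:ℝ)) ⬝ᵥ θ.mulVec (Pi.single l' 1) = θ j' l' := by
      intro j' l'
      rw [Matrix.mulVec_single, single_dotProduct]
      simp
    have hdiag : ∀ i, 0 ≤ θ i i := by
      intro i
      have := quad (Pi.single i 1)
      rwa [hsingle i i] at this
    have hdiag_le : ∀ i, θ i i ≤ R.trace := by
      intro i
      have h1 : θ i i ≤ θ.trace := by
        have : θ.trace = ∑ i', θ i' i' := rfl
        rw [this]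
        exact Finset.single_le_sum (fun i' _ => hdiag i') (Finset.mem_univ i)
      linarith
    have hsym : θ j l = θ l j := by
      have := hpsd.1.apply l j
      simpa using this
    have hplus := quad (Pi.single j 1 + Pi.single l 1)
    have hminus := quad (Pi.single j 1 - Pi.single l 1)
    rw [Matrix.mulVec_add, add_dotProduct, dotProduct_add,
      dotProduct_add, hsingle, hsingle, hsingle, hsingle] at hplus
    rw [Matrix.mulVec_sub, sub_dotProduct, dotProduct_sub,
      dotProduct_sub, hsingle, hsingle, hsingle, hsingle] at hminus
    constructor
    · nlinarith [hdiag_le j, hdiag_le l, hdiag j, hdiag l]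
    · nlinarith [hdiag_le j, hdiag_le l, hdiag j, hdiag l]
  -- the window
  have hqK : ∀ i : Fin q, (i : ℕ) < K := fun i => by have := i.isLt; omega
  set W : Fin q → Fin K := fun i => ⟨i, hqK i⟩ with hW_def
  have hW_inj : Function.Injective W := by
    intro i i' h
    have := congrArg (fun x : Fin K => x.val) h
    exact Fin.ext this
  -- the compact set of low-rank candidates
  set T : Set (Matrix (Fin K) (Fin K) ℝ) :=
    {θ | θ.PosSemidef ∧ θ.trace ≤ R.trace ∧ (θ.submatrix W W).det = 0} with hT_def
  set G : Matrix (Fin K) (Fin K) ℝ → ℝ :=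
    fun θ => frobSq ((bandMatrix K δ).hadamard (R - θ)) with hG_def
  have hGcont : Continuous G := by
    apply continuous_finset_sum
    intro j _
    apply continuous_finset_sum
    intro l _
    have h1 : Continuous fun θ : Matrix (Fin K) (Fin K) ℝ =>
        ((bandMatrix K δ).hadamard (R - θ)) j l := by
      simp only [Matrix.hadamard_apply, Matrix.sub_apply]
      exact continuous_const.mul (continuous_const.sub (continuous_id.matrix_elem j l))
    exact h1.pow 2
  have hbox : IsCompact {θ : Matrix (Fin K) (Fin K) ℝ |
      ∀ j l, θ j l ∈ Set.Icc (-(R.trace)) R.trace} := by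
    have heq : {θ : Matrix (Fin K) (Fin K) ℝ | ∀ j l, θ j l ∈ Set.Icc (-(R.trace)) R.trace} =
        Set.pi Set.univ (fun _ : Fin K =>
          Set.pi Set.univ fun _ : Fin K => Set.Icc (-(R.trace)) R.trace) := by
      ext θ
      exact ⟨fun h j _ l _ => h j l, fun h j l => h j (Set.mem_univ j) l (Set.mem_univ l)⟩
    rw [heq]
    exact isCompact_univ_pi fun _ => isCompact_univ_pi fun _ => isCompact_Icc
  have hTclosed : IsClosed T := by
    have h1 : IsClosed {θ : Matrix (Fin K) (Fin K) ℝ | θ.PosSemidef} := by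
      have heq : {θ : Matrix (Fin K) (Fin K) ℝ | θ.PosSemidef} =
          (⋂ jl : Fin K × Fin K, {θ : Matrix (Fin K) (Fin K) ℝ | θ jl.1 jl.2 = θ jl.2 jl.1}) ∩
          ⋂ x : Fin K → ℝ, {θ : Matrix (Fin K) (Fin K) ℝ | 0 ≤ x ⬝ᵥ θ.mulVec x} := by
        ext θ
        constructor
        · intro hpsd
          refine ⟨Set.mem_iInter.mpr fun jl => ?_, Set.mem_iInter.mpr fun x => ?_⟩
          · have := hpsd.1.apply jl.2 jl.1
            simpa using this
          · simpa using hpsd.dotProduct_mulVec_nonneg x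
        · rintro ⟨hsym, hquad⟩
          refine Matrix.PosSemidef.of_dotProduct_mulVec_nonneg ?_ ?_
          · ext i jj
            rw [Matrix.conjTranspose_apply]
            have := Set.mem_iInter.mp hsym (jj, i)
            simpa using this
          · intro x
            have := Set.mem_iInter.mp hquad x
            simpa using this
      rw [heq]
      refine IsClosed.inter (isClosed_iInter fun jl => ?_) (isClosed_iInter fun x => ?_)
      · exact isClosed_eq (continuous_id.matrix_elem _ _) (continuous_id.matrix_elem _ _)
      · exact isClosed_le continuous_const
          (Continuous.dotProduct continuous_const
            (continuous_id.matrix_mulVec continuous_const))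
    have h2 : IsClosed {θ : Matrix (Fin K) (Fin K) ℝ | θ.trace ≤ R.trace} :=
      isClosed_le (continuous_id.matrix_trace) continuous_const
    have h3 : IsClosed {θ : Matrix (Fin K) (Fin K) ℝ | (θ.submatrix W W).det = 0} :=
      isClosed_eq ((continuous_id.matrix_submatrix W W).matrix_det) continuous_const
    have heq : T = {θ : Matrix (Fin K) (Fin K) ℝ | θ.PosSemidef} ∩
        ({θ : Matrix (Fin K) (Fin K) ℝ | θ.trace ≤ R.trace} ∩
         {θ : Matrix (Fin K) (Fin K) ℝ | (θ.submatrix W W).det = 0}) := by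
      ext θ; simp [hT_def, Set.mem_inter_iff, and_assoc]
    rw [heq]
    exact h1.inter (h2.inter h3)
  have hTcompact : IsCompact T := by
    refine hbox.of_isClosed_subset hTclosed ?_
    intro θ hθ
    exact hbound θ hθ.1 hθ.2.1
  have hTne : T.Nonempty := by
    refine ⟨0, Matrix.PosSemidef.zero, by simp [Matrix.trace]; exact hRtr, ?_⟩
    have : (0 : Matrix (Fin K) (Fin K) ℝ).submatrix W W = 0 := rfl
    rw [this]
    have : Nonempty (Fin q) := ⟨⟨0, by omega⟩⟩
    exact Matrix.det_zero
  obtain ⟨θmin, hθminT, hminOn⟩ := hTcompact.exists_isMinOn hTne hGcont.continuousOn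
  have hmin : ∀ x ∈ T, G θmin ≤ G x := fun x hx => hminOn hx
  set c : ℝ := G θmin with hc_def
  have hc_pos : 0 < c := by
    rcases lt_or_eq_of_le (hfrob_nonneg θmin) with h | h
    · exact h
    · exfalso
      have hzb := hzero_band θmin h.symm
      have hWsub : θmin.submatrix W W = R.submatrix W W := by
        ext i i'
        simp only [Matrix.submatrix_apply]
        refine hzb (W i) (W i') ?_
        have hi := i.isLt; have hi' := i'.isLt
        simp only [hW_def]
        rw [abs_sub_le_iff]
        constructor <;> (push_cast; omega)
      have := hθminT.2.2
      rw [hWsub] at this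
      exact hminor W W hW_inj hW_inj this
  refine ⟨c / ((q:ℝ) * (K:ℝ)^2), by positivity, ?_⟩
  rintro τ ⟨hτ0, hτ1⟩ θ hθpsd hθtr
  have hτq : τ * (q:ℝ) < c / (K:ℝ)^2 := by
    have h1 : τ * (q:ℝ) < (c / ((q:ℝ) * (K:ℝ)^2)) * (q:ℝ) :=
      mul_lt_mul_of_pos_right hτ1 (by positivity)
    have h2 : (c / ((q:ℝ) * (K:ℝ)^2)) * (q:ℝ) = c / (K:ℝ)^2 := by
      field_simp
    rw [h2] at h1
    exact h1
  have hθsym : ∀ j l : Fin K, θ j l = θ l j := fun j l => by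
    simpa using hθpsd.1.apply l j
  have hRsym : ∀ j l : Fin K, R j l = R l j := fun j l => by
    simpa using hR.1.apply l j
  have hKinv : (0:ℝ) < ((K:ℝ)^2)⁻¹ := by positivity
  by_cases hrk : θ.rank ≤ p
  · -- low-rank case: the band term is bounded below by `c`
    have hθT : θ ∈ T := ⟨hθpsd, hθtr, det_submatrix_eq_zero θ hrk W W⟩
    have hcle : c ≤ frobSq ((bandMatrix K δ).hadamard (R - θ)) := hmin θ hθT
    have hstrict : τ * (q:ℝ) < ((K:ℝ)^2)⁻¹ * frobSq ((bandMatrix K δ).hadamard (R - θ)) := by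
      have h3 : c / (K:ℝ)^2 ≤ ((K:ℝ)^2)⁻¹ * frobSq ((bandMatrix K δ).hadamard (R - θ)) := by
        rw [div_eq_inv_mul]
        exact mul_le_mul_of_nonneg_left hcle (le_of_lt hKinv)
      linarith
    have hrknn : (0:ℝ) ≤ τ * (θ.rank : ℝ) := by positivity
    constructor
    · rw [hfrobR, hrank]
      linarith
    · intro heq
      exfalso
      rw [hfrobR, hrank] at heq
      have : ((K:ℝ)^2)⁻¹ * frobSq ((bandMatrix K δ).hadamard (R - θ)) + τ * (θ.rank : ℝ)
          = τ * (q:ℝ) := by rw [heq]; ring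
      linarith
  · -- rank at least q
    have hrkge : q ≤ θ.rank := by omega
    have hrkge' : (q:ℝ) ≤ (θ.rank : ℝ) := Nat.cast_le.mpr hrkge
    have hfr := hfrob_nonneg θ
    constructor
    · rw [hfrobR, hrank]
      have h4 : (0:ℝ) ≤ ((K:ℝ)^2)⁻¹ * frobSq ((bandMatrix K δ).hadamard (R - θ)) :=
        mul_nonneg (le_of_lt hKinv) hfr
      have h5 : τ * (q:ℝ) ≤ τ * (θ.rank : ℝ) :=
        mul_le_mul_of_nonneg_left hrkge' (le_of_lt hτ0)
      linarith
    · intro heq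
      rw [hfrobR, hrank] at heq
      have heq' : ((K:ℝ)^2)⁻¹ * frobSq ((bandMatrix K δ).hadamard (R - θ))
          = τ * (q:ℝ) - τ * (θ.rank : ℝ) := by linarith
      have hG0 : frobSq ((bandMatrix K δ).hadamard (R - θ)) = 0 := by
        have h4 : ((K:ℝ)^2)⁻¹ * frobSq ((bandMatrix K δ).hadamard (R - θ)) ≤ 0 := by
          rw [heq']
          have : τ * (q:ℝ) ≤ τ * (θ.rank : ℝ) :=
            mul_le_mul_of_nonneg_left hrkge' (le_of_lt hτ0)
          linarith
        have h5 : ((K:ℝ)^2)⁻¹ * frobSq ((bandMatrix K δ).hadamard (R - θ)) = 0 :=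
          le_antisymm h4 (mul_nonneg (le_of_lt hKinv) hfr)
        rcases mul_eq_zero.mp h5 with h | h
        · exact absurd h (ne_of_gt hKinv)
        · exact h
      have hrk_le : θ.rank ≤ q := by
        have h6 : τ * (θ.rank : ℝ) = τ * (q:ℝ) := by
          rw [hG0, mul_zero] at heq'
          linarith
        have h7 : (θ.rank : ℝ) = (q:ℝ) := mul_left_cancel₀ (ne_of_gt hτ0) h6
        exact_mod_cast le_of_eq h7
      exact band_ident hq R θ hθsym hRsym (le_of_eq hrank) hrk_le hminor (hzero_band θ hG0)
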